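/- (Theorem 5.1, part 1: certified radius of GenELLIPS with a locally Lipschitz encoder.) Fix D, d ≥ 1, let f : ℝ^D → ℝ^d, let x ∈ ℝ^D, and suppose f is L-Lipschitz on the closed Euclidean ball of radius R around x, for some L > 0 and R ≥ 0. Consider the ELLIPS classifier in the latent space ℝ^d, let z = f(x), suppose the score at z has a unique maximizing class i_* with margin m(z) > 0 and c_M(z) = max_{i≠i_*} ‖Σ_{i_*}⁻¹(z−μ_{i_*}) − Σ_i⁻¹(z−μ_i)‖₂ > 0, and let λ_min = min_{i≠i_*} λ_min(Σ_i⁻¹ − Σ_{i_*}⁻¹). If L·R ≤ m(z) / ( √(c_M(z)² + (−λ_min)_+ · m(z)) + c_M(z) ), then for every x' ∈ ℝ^D with ‖x'−x‖₂ ≤ R and every i ≠ i_*, score(f(x'), i_*) ≥ score(f(x'), i); in particular GenELLIPS classifies x' as class i_*. Here (t)_+ = max(t,0). -/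

import Mathlib

open Matrix Real

/-- The Euclidean (ℓ₂) norm of a vector in `Fin d → ℝ`. -/
noncomputable def l2norm {d : ℕ} (v : Fin d → ℝ) : ℝ :=
  Real.sqrt (v ⬝ᵥ v)

/-- The smallest eigenvalue of a symmetric matrix, given by the Rayleigh quotient
characterization: the infimum of `vᵀ M v` over unit vectors `v`. -/
noncomputable def minEig {d : ℕ} (M : Matrix (Fin d) (Fin d) ℝ) : ℝ :=
  ⨅ v : {v : Fin d → ℝ // v ⬝ᵥ v = 1}, (v : Fin d → ℝ) ⬝ᵥ (M *ᵥ (v : Fin d → ℝ))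

/-- The ELLIPS score of class `i` at point `z`:
`score(z, i) = −(z−μᵢ)ᵀΣᵢ⁻¹(z−μᵢ) − log det Σᵢ + 2 log πᵢ`. -/
noncomputable def score {d K : ℕ} (μ : Fin K → Fin d → ℝ)
    (S : Fin K → Matrix (Fin d) (Fin d) ℝ) (pri : Fin K → ℝ)
    (z : Fin d → ℝ) (i : Fin K) : ℝ :=
  -((z - μ i) ⬝ᵥ ((S i)⁻¹ *ᵥ (z - μ i))) - Real.log (S i).det + 2 * Real.log (pri i)

lemma dot_self_nonneg {d : ℕ} (v : Fin d → ℝ) : 0 ≤ v ⬝ᵥ v :=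
  Finset.sum_nonneg fun i _ => mul_self_nonneg (v i)

lemma l2norm_nonneg {d : ℕ} (v : Fin d → ℝ) : 0 ≤ l2norm v := Real.sqrt_nonneg _

lemma l2norm_sq {d : ℕ} (v : Fin d → ℝ) : l2norm v ^ 2 = v ⬝ᵥ v :=
  Real.sq_sqrt (dot_self_nonneg v)

lemma cs_dot {d : ℕ} (v w : Fin d → ℝ) : v ⬝ᵥ w ≤ l2norm v * l2norm w := by
  have h := Real.sum_mul_le_sqrt_mul_sqrt Finset.univ v w
  simp only [l2norm, dotProduct]
  simpa [pow_two] using h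

lemma dot_mulVec_symm {d : ℕ} (A : Matrix (Fin d) (Fin d) ℝ) (hA : Aᵀ = A)
    (u v : Fin d → ℝ) : u ⬝ᵥ (A *ᵥ v) = v ⬝ᵥ (A *ᵥ u) := by
  nth_rewrite 1 [← hA]
  rw [Matrix.dotProduct_mulVec, Matrix.vecMul_transpose, dotProduct_comm]

lemma expand_quad {d : ℕ} (A : Matrix (Fin d) (Fin d) ℝ) (hA : Aᵀ = A)
    (δ w : Fin d → ℝ) : (δ + w) ⬝ᵥ (A *ᵥ (δ + w))
      = w ⬝ᵥ (A *ᵥ w) + 2 * (δ ⬝ᵥ (A *ᵥ w)) + δ ⬝ᵥ (A *ᵥ δ) := by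
  rw [Matrix.mulVec_add, add_dotProduct, dotProduct_add,
    dotProduct_add, dot_mulVec_symm A hA w δ]
  ring

lemma minEig_bddBelow {d : ℕ} (M : Matrix (Fin d) (Fin d) ℝ) :
    BddBelow (Set.range fun v : {v : Fin d → ℝ // v ⬝ᵥ v = 1} =>
      (v : Fin d → ℝ) ⬝ᵥ (M *ᵥ (v : Fin d → ℝ))) := by
  refine ⟨-(∑ i, ∑ j, |M i j|), ?_⟩
  rintro _ ⟨⟨v, hv⟩, rfl⟩
  have hvle : ∀ k, |v k| ≤ 1 := by
    intro k
    rw [abs_le_one_iff_mul_self_le_one]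
    calc v k * v k ≤ ∑ i, v i * v i :=
          Finset.single_le_sum (fun i _ => mul_self_nonneg (v i)) (Finset.mem_univ k)
      _ = 1 := hv
  have habs : |v ⬝ᵥ (M *ᵥ v)| ≤ ∑ i, ∑ j, |M i j| := by
    calc |v ⬝ᵥ (M *ᵥ v)| = |∑ i, v i * ∑ j, M i j * v j| := rfl
      _ ≤ ∑ i, |v i * ∑ j, M i j * v j| := Finset.abs_sum_le_sum_abs _ _
      _ ≤ ∑ i, ∑ j, |M i j| := by
          refine Finset.sum_le_sum fun i _ => ?_
          rw [abs_mul]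
          calc |v i| * |∑ j, M i j * v j| ≤ 1 * ∑ j, |M i j * v j| := by
                apply mul_le_mul (hvle i) (Finset.abs_sum_le_sum_abs _ _)
                  (abs_nonneg _) zero_le_one
            _ = ∑ j, |M i j| * |v j| := by simp [abs_mul]
            _ ≤ ∑ j, |M i j| * 1 := Finset.sum_le_sum fun j _ =>
                mul_le_mul_of_nonneg_left (hvle j) (abs_nonneg _)
            _ = ∑ j, |M i j| := by simp
  dsimp only
  linarith [neg_abs_le (v ⬝ᵥ (M *ᵥ v))]

lemma rayleigh_lower {d : ℕ} (M : Matrix (Fin d) (Fin d) ℝ) (δ : Fin d → ℝ) :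
    minEig M * (δ ⬝ᵥ δ) ≤ δ ⬝ᵥ (M *ᵥ δ) := by
  rcases eq_or_lt_of_le (dot_self_nonneg δ) with h0 | hpos
  · have hδ : δ = 0 := by
      funext k
      have : ∀ i ∈ Finset.univ, (0:ℝ) ≤ δ i * δ i := fun i _ => mul_self_nonneg _
      have hz := (Finset.sum_eq_zero_iff_of_nonneg this).mp h0.symm k (Finset.mem_univ k)
      exact mul_self_eq_zero.mp hz
    simp [hδ, dotProduct]
  · set c := δ ⬝ᵥ δ with hc
    have hcs : Real.sqrt c ^ 2 = c := Real.sq_sqrt hpos.le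
    have hspos : 0 < Real.sqrt c := Real.sqrt_pos.mpr hpos
    set v := (Real.sqrt c)⁻¹ • δ with hvdef
    have hv : v ⬝ᵥ v = 1 := by
      rw [hvdef, smul_dotProduct, dotProduct_smul, smul_eq_mul, smul_eq_mul]
      field_simp
      exact hcs.symm
    have hle : minEig M ≤ v ⬝ᵥ (M *ᵥ v) :=
      ciInf_le (minEig_bddBelow M) ⟨v, hv⟩
    have hvM : v ⬝ᵥ (M *ᵥ v) = (Real.sqrt c)⁻¹ * ((Real.sqrt c)⁻¹ * (δ ⬝ᵥ (M *ᵥ δ))) := by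
      rw [hvdef, Matrix.mulVec_smul, smul_dotProduct, dotProduct_smul,
        smul_eq_mul, smul_eq_mul]
    rw [hvM] at hle
    have h2 : minEig M * c ≤ (Real.sqrt c)⁻¹ * ((Real.sqrt c)⁻¹ * (δ ⬝ᵥ (M *ᵥ δ))) * c :=
      mul_le_mul_of_nonneg_right hle hpos.le
    calc minEig M * (δ ⬝ᵥ δ) = minEig M * c := rfl
      _ ≤ (Real.sqrt c)⁻¹ * ((Real.sqrt c)⁻¹ * (δ ⬝ᵥ (M *ᵥ δ))) * c := h2
      _ = δ ⬝ᵥ (M *ᵥ δ) := by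
          field_simp
          rw [hcs]; ring

lemma key_arith (m cM ν ρ : ℝ) (hm : 0 < m) (hc : 0 < cM) (hν : 0 ≤ ν) (hρ : 0 ≤ ρ)
    (h : ρ ≤ m / (Real.sqrt (cM ^ 2 + ν * m) + cM)) : 2 * cM * ρ + ν * ρ ^ 2 ≤ m := by
  set s := Real.sqrt (cM ^ 2 + ν * m) with hs
  have hs2 : s ^ 2 = cM ^ 2 + ν * m := Real.sq_sqrt (by positivity)
  have hs0 : 0 ≤ s := Real.sqrt_nonneg _
  have hsc : 0 < s + cM := by linarith
  set t := m / (s + cM) with ht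
  have ht0 : 0 ≤ t := by positivity
  have hstar : ν * t ^ 2 + 2 * cM * t = m := by
    have htm : t * (s + cM) = m := by rw [ht]; field_simp
    have hνt : ν * t = s - cM := by
      apply mul_right_cancel₀ hsc.ne'
      linear_combination ν * htm - hs2
    linear_combination t * hνt + htm
  have hsq : ρ ^ 2 ≤ t ^ 2 := by nlinarith
  nlinarith [mul_le_mul_of_nonneg_left hsq hν]


theorem stmt17 {D d K : ℕ} (hD : 1 ≤ D) (hd : 1 ≤ d) (hK : 2 ≤ K)
    (μ : Fin K → Fin d → ℝ) (S : Fin K → Matrix (Fin d) (Fin d) ℝ)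
    (pri : Fin K → ℝ) (hpri : ∀ i, 0 < pri i) (hS : ∀ i, (S i).PosDef)
    (f : (Fin D → ℝ) → Fin d → ℝ) (x : Fin D → ℝ) (L R : ℝ) (hL : 0 < L) (hR : 0 ≤ R)
    (hLip : ∀ u v : Fin D → ℝ, l2norm (u - x) ≤ R → l2norm (v - x) ≤ R →
      l2norm (f u - f v) ≤ L * l2norm (u - v))
    (z : Fin d → ℝ) (hz : z = f x) (istar : Fin K)
    (hmaxUnique : ∀ i, i ≠ istar → score μ S pri z i < score μ S pri z istar)
    (m cM lam : ℝ)
    (hm : m = score μ S pri z istar - ⨆ i : {i : Fin K // i ≠ istar}, score μ S pri z i)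
    (hcM : cM = ⨆ i : {i : Fin K // i ≠ istar},
      l2norm ((S istar)⁻¹ *ᵥ (z - μ istar) - (S i)⁻¹ *ᵥ (z - μ i)))
    (hlam : lam = ⨅ i : {i : Fin K // i ≠ istar}, minEig ((S i)⁻¹ - (S istar)⁻¹))
    (hmpos : 0 < m) (hcMpos : 0 < cM)
    (hcert : L * R ≤ m / (Real.sqrt (cM ^ 2 + max (-lam) 0 * m) + cM)) :
    ∀ x' : Fin D → ℝ, l2norm (x' - x) ≤ R →
      ∀ i, i ≠ istar → score μ S pri (f x') i ≤ score μ S pri (f x') istar := by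
  intro x' hx' i hi
  -- symmetry of the inverse matrices
  have hsym : ∀ j, ((S j)⁻¹)ᵀ = (S j)⁻¹ := by
    intro j
    have h := ((hS j).isHermitian.inv)
    simpa [Matrix.IsHermitian, Matrix.conjTranspose_eq_transpose_of_trivial] using h
  set δ : Fin d → ℝ := f x' - z with hδdef
  set ρ : ℝ := l2norm δ with hρdef
  have hρ0 : 0 ≤ ρ := l2norm_nonneg δ
  -- ρ ≤ L * R
  have hxx : l2norm (x - x) ≤ R := by
    simp [l2norm, dotProduct]
    exact hR
  have hρLR : ρ ≤ L * R := by
    have h1 := hLip x' x hx' hxx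
    have h2 : L * l2norm (x' - x) ≤ L * R := mul_le_mul_of_nonneg_left hx' hL.le
    rw [hρdef, hδdef, hz]
    linarith
  -- subtype index facts
  haveI : Nonempty {i : Fin K // i ≠ istar} := by
    obtain ⟨j, hj⟩ := Fintype.exists_ne_of_one_lt_card (by simp; omega) istar
    exact ⟨⟨j, hj⟩⟩
  set ι := {i : Fin K // i ≠ istar}
  -- margin bound: score z istar - score z i ≥ m
  have hscore_i : score μ S pri z i ≤ ⨆ j : ι, score μ S pri z j :=
    le_ciSup (f := fun j : ι => score μ S pri z (j : Fin K))
      (Set.Finite.bddAbove (Set.finite_range _)) (⟨i, hi⟩ : ι)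
  have hmargin : m ≤ score μ S pri z istar - score μ S pri z i := by
    rw [hm]; linarith
  -- cM bound
  set w : Fin d → ℝ := (S istar)⁻¹ *ᵥ (z - μ istar) - (S i)⁻¹ *ᵥ (z - μ i) with hwdef
  have hwcM : l2norm w ≤ cM := by
    rw [hcM]
    exact le_ciSup (f := fun j : ι =>
        l2norm ((S istar)⁻¹ *ᵥ (z - μ istar) - (S (j : Fin K))⁻¹ *ᵥ (z - μ (j : Fin K))))
      (Set.Finite.bddAbove (Set.finite_range _)) (⟨i, hi⟩ : ι)
  -- lam bound
  have hlamle : lam ≤ minEig ((S i)⁻¹ - (S istar)⁻¹) := by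
    rw [hlam]
    exact ciInf_le (f := fun j : ι => minEig ((S (j : Fin K))⁻¹ - (S istar)⁻¹))
      (Set.Finite.bddBelow (Set.finite_range _)) (⟨i, hi⟩ : ι)
  set ν : ℝ := max (-lam) 0 with hνdef
  have hν0 : 0 ≤ ν := le_max_right _ _
  have hlamν : -ν ≤ lam := by
    rcases le_total lam 0 with h | h
    · have : ν = -lam := by rw [hνdef]; exact max_eq_left (by linarith)
      simp [this]
    · have : -ν ≤ 0 := by simp [hν0]
      linarith
  -- score difference expansion
  have hzi : ∀ j, f x' - μ j = δ + (z - μ j) := by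
    intro j; funext k; simp [hδdef]
  have hexp : ∀ j, (f x' - μ j) ⬝ᵥ ((S j)⁻¹ *ᵥ (f x' - μ j))
      = (z - μ j) ⬝ᵥ ((S j)⁻¹ *ᵥ (z - μ j))
        + 2 * (δ ⬝ᵥ ((S j)⁻¹ *ᵥ (z - μ j))) + δ ⬝ᵥ ((S j)⁻¹ *ᵥ δ) := by
    intro j
    rw [hzi j]
    exact expand_quad _ (hsym j) _ _
  have hdiff : score μ S pri (f x') istar - score μ S pri (f x') i
      = (score μ S pri z istar - score μ S pri z i)
        - 2 * (δ ⬝ᵥ w)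
        + δ ⬝ᵥ (((S i)⁻¹ - (S istar)⁻¹) *ᵥ δ) := by
    have hsplit : δ ⬝ᵥ (((S i)⁻¹ - (S istar)⁻¹) *ᵥ δ)
        = δ ⬝ᵥ ((S i)⁻¹ *ᵥ δ) - δ ⬝ᵥ ((S istar)⁻¹ *ᵥ δ) := by
      rw [Matrix.sub_mulVec, dotProduct_sub]
    have hwsplit : δ ⬝ᵥ w
        = δ ⬝ᵥ ((S istar)⁻¹ *ᵥ (z - μ istar)) - δ ⬝ᵥ ((S i)⁻¹ *ᵥ (z - μ i)) := by
      rw [hwdef, dotProduct_sub]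
    rw [hsplit, hwsplit]
    simp only [score, hexp istar, hexp i]
    ring
  -- bounds on the correction terms
  have hcs : δ ⬝ᵥ w ≤ ρ * cM := by
    calc δ ⬝ᵥ w ≤ l2norm δ * l2norm w := cs_dot δ w
      _ ≤ ρ * cM := mul_le_mul_of_nonneg_left hwcM hρ0
  have hquad : -(ν * ρ ^ 2) ≤ δ ⬝ᵥ (((S i)⁻¹ - (S istar)⁻¹) *ᵥ δ) := by
    have h1 := rayleigh_lower ((S i)⁻¹ - (S istar)⁻¹) δ
    have h2 : lam * (δ ⬝ᵥ δ) ≤ minEig ((S i)⁻¹ - (S istar)⁻¹) * (δ ⬝ᵥ δ) :=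
      mul_le_mul_of_nonneg_right hlamle (dot_self_nonneg δ)
    have h3 : -(ν * (δ ⬝ᵥ δ)) ≤ lam * (δ ⬝ᵥ δ) :=
      mul_le_mul_of_nonneg_right hlamν (dot_self_nonneg δ) |>.trans_eq' (by ring)
    have h4 : ρ ^ 2 = δ ⬝ᵥ δ := l2norm_sq δ
    rw [h4]
    linarith
  -- key arithmetic
  have hkey : 2 * cM * ρ + ν * ρ ^ 2 ≤ m := by
    apply key_arith m cM ν ρ hmpos hcMpos hν0 hρ0
    exact le_trans hρLR hcert
  linarith [hdiff, hmargin, hcs, hquad, hkey,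
    mul_le_mul_of_nonneg_left hcs (by norm_num : (0:ℝ) ≤ 2)]
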